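/- Let A, B be real n×n matrices with B invertible and B⁻¹A = −2EQE + P, write 𝒢 := B⁻¹A, let ν ∈ ℝⁿ and u ∈ ℂⁿ, and set w := B⁻¹(ν + u) − 𝒢·π𝟙 ∈ ℂⁿ. Then for every z ∈ ℍⁿ the potential function S is holomorphic in a neighborhood of y(z), and its holomorphic gradient satisfies ∇S(y(z)) = 0 if and only if A·(Log z₁, …, Log zₙ)ᵀ + B·(Log z₁'', …, Log zₙ'')ᵀ = i(ν + u). -/

import Mathlib

open Matrix Real

/-- The dilogarithm `Li₂(z) = -∫₀¹ Log(1 - z t) / t dt`. -/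
noncomputable def Li2 (z : ℂ) : ℂ :=
  -∫ t in (0:ℝ)..(1:ℝ), Complex.log (1 - z * (t : ℂ)) / (t : ℂ)

/-- The sign `ε_k`: `1` for the first `nP` indices (positive tetrahedra),
`-1` for the remaining ones (negative tetrahedra). -/
def epsR (nP n : ℕ) (k : Fin n) : ℝ := if (k : ℕ) < nP then 1 else -1

/-- The potential function
`S(y) = i yᵀQy + Σ (-ε_k) y_k w_k + i Σ_{k ≤ n₊} Li₂(-e^{y_k}) - i Σ_{k > n₊} Li₂(-e^{y_k})`. -/
noncomputable def potential (nP nN : ℕ) (Q : Matrix (Fin (nP + nN)) (Fin (nP + nN)) ℝ)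
    (w : Fin (nP + nN) → ℂ) (y : Fin (nP + nN) → ℂ) : ℂ :=
  Complex.I * (y ⬝ᵥ (Q.map Complex.ofReal).mulVec y)
    + ∑ k, -(epsR nP (nP + nN) k : ℂ) * y k * w k
    + Complex.I * ∑ k ∈ Finset.univ.filter (fun k : Fin (nP + nN) => (k : ℕ) < nP),
        Li2 (-Complex.exp (y k))
    - Complex.I * ∑ k ∈ Finset.univ.filter (fun k : Fin (nP + nN) => ¬ (k : ℕ) < nP),
        Li2 (-Complex.exp (y k))


section Helpers
open Complex MeasureTheory intervalIntegral Set Metric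


lemma myLog_neg_of_im_pos {w : ℂ} (h : 0 < w.im) :
    Complex.log (-w) = Complex.log w - Real.pi * Complex.I := by
  have hw : w ≠ 0 := fun h0 => by simp [h0] at h
  apply Complex.ext
  · simp [Complex.log_re]
  · simp [Complex.log_im, Complex.arg_neg_eq_arg_sub_pi_of_im_pos h]

lemma myLog_div_of_im_pos {a b : ℂ} (ha : 0 < a.im) (hb : 0 < b.im) :
    Complex.log (a / b) = Complex.log a - Complex.log b := by
  have ha0 : a ≠ 0 := fun h0 => by simp [h0] at ha
  have hb0 : b ≠ 0 := fun h0 => by simp [h0] at hb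
  have hbarg : Complex.arg b ≠ π := by
    intro h
    rw [Complex.arg_eq_pi_iff] at h
    exact hb.ne' h.2
  have hbpos : 0 < Complex.arg b := by
    rcases (Complex.arg_nonneg_iff.mpr hb.le).lt_or_eq with h | h
    · exact h
    · exact absurd ((Complex.arg_eq_zero_iff.mp h.symm)).2 hb.ne'
  have hapos : 0 < Complex.arg a := by
    rcases (Complex.arg_nonneg_iff.mpr ha.le).lt_or_eq with h | h
    · exact h
    · exact absurd ((Complex.arg_eq_zero_iff.mp h.symm)).2 ha.ne'
  have halt : Complex.arg a < π := lt_of_le_of_ne (Complex.arg_le_pi a) (by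
    intro h; rw [Complex.arg_eq_pi_iff] at h; exact ha.ne' h.2)
  have hblt : Complex.arg b < π := lt_of_le_of_ne (Complex.arg_le_pi b) hbarg
  have hinv : Complex.arg b⁻¹ = -Complex.arg b := by
    rw [Complex.arg_inv, if_neg hbarg]
  rw [div_eq_mul_inv, Complex.log_mul ha0 (inv_ne_zero hb0) ?_, Complex.log_inv _ hbarg,
    sub_eq_add_neg]
  rw [hinv]
  constructor
  · nlinarith [Real.pi_pos]
  · nlinarith

lemma aux_ne {x : ℂ} (hx : x.im ≠ 0) (t : ℝ) : 1 - x * (t:ℂ) ≠ 0 := by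
  rcases eq_or_ne t 0 with rfl | ht
  · simp
  · intro h
    have h2 : (1 - x * (t:ℂ)).im = 0 := by rw [h]; simp
    simp only [Complex.sub_im, Complex.one_im, Complex.mul_im, Complex.ofReal_re,
      Complex.ofReal_im, mul_zero, add_zero, zero_sub, neg_eq_zero, zero_add] at h2
    exact (mul_ne_zero hx ht) h2

lemma aux_slit' {x : ℂ} (hx : x.im ≠ 0) (t : ℝ) :
    1 - x * (t:ℂ) ∈ Complex.slitPlane := by
  rcases eq_or_ne t 0 with rfl | ht
  · simp [Complex.mem_slitPlane_iff]
  · apply Complex.mem_slitPlane_iff.mpr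
    right
    simp only [Complex.sub_im, Complex.one_im, Complex.mul_im, Complex.ofReal_re,
      Complex.ofReal_im, mul_zero, add_zero, zero_sub, ne_eq, neg_eq_zero, zero_add]
    exact mul_ne_zero hx ht

lemma aux_hasDerivAt_logt {z : ℂ} (hz : z.im ≠ 0) (t : ℝ) :
    HasDerivAt (fun s : ℝ => Complex.log (1 - z * (s:ℂ))) (-z / (1 - z * (t:ℂ))) t := by
  have h1 : HasDerivAt (fun s : ℂ => 1 - z * s) (-z) (t:ℂ) := by
    simpa using ((hasDerivAt_id ((t:ℝ):ℂ)).const_mul z).const_sub 1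
  exact (h1.clog (aux_slit' hz t)).comp_ofReal

lemma aux_int_inv {z : ℂ} (hz : z.im ≠ 0) :
    ∫ t in (0:ℝ)..(1:ℝ), (1 - z * (t:ℂ))⁻¹ = -z⁻¹ * Complex.log (1 - z) := by
  have hz0 : z ≠ 0 := fun h => hz (by simp [h])
  have h := intervalIntegral.integral_eq_sub_of_hasDerivAt
    (f := fun t : ℝ => -z⁻¹ * Complex.log (1 - z * (t:ℂ)))
    (f' := fun t : ℝ => (1 - z * (t:ℂ))⁻¹) (a := (0:ℝ)) (b := 1)
    (fun t _ => by
      have h2 := (aux_hasDerivAt_logt hz t).const_mul (-z⁻¹)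
      refine h2.congr_deriv (Eq.symm ?_)
      field_simp [aux_ne hz t])
    (by
      apply Continuous.intervalIntegrable
      exact (continuous_const.sub ((continuous_const.mul Complex.continuous_ofReal))).inv₀
        (fun t => aux_ne hz t))
  rw [h]
  simp

lemma aux_cont_int {x : ℂ} (hx : x.im ≠ 0) :
    IntervalIntegrable (fun t : ℝ => Complex.log (1 - x * (t:ℂ)) / (t:ℂ)) volume 0 1 := by
  set h : ℝ → ℂ := fun t => if t = 0 then -x else Complex.log (1 - x * (t:ℂ)) / (t:ℂ) with hh
  have hg : HasDerivAt (fun t : ℝ => Complex.log (1 - x * (t:ℂ))) (-x) 0 := by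
    have := aux_hasDerivAt_logt hx 0
    simpa using this
  have hcont : ContinuousOn h (Set.Icc 0 1) := by
    intro t ht
    rcases eq_or_ne t 0 with rfl | ht0
    · rw [← continuousWithinAt_diff_self]
      have hslope := hasDerivAt_iff_tendsto_slope.mp hg
      have hsub : Set.Icc (0:ℝ) 1 \ {0} ⊆ {(0:ℝ)}ᶜ := fun s hs => hs.2
      have h1 : Filter.Tendsto h (nhdsWithin 0 (Set.Icc (0:ℝ) 1 \ {0})) (nhds (-x)) := by
        apply Filter.Tendsto.congr' _ (hslope.mono_left (nhdsWithin_mono _ hsub))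
        filter_upwards [self_mem_nhdsWithin] with s hs
        have hs0 : s ≠ 0 := hs.2
        simp only [hh, slope_def_module, if_neg hs0, sub_zero, Complex.ofReal_zero,
          mul_zero, sub_zero, Complex.log_one]
        rw [Complex.real_smul, Complex.ofReal_inv, div_eq_inv_mul]
      simpa [ContinuousWithinAt, hh] using h1
    · have hco : ContinuousAt (fun s : ℝ => Complex.log (1 - x * (s:ℂ)) / (s:ℂ)) t := by
        apply ContinuousAt.div
        · exact ((aux_hasDerivAt_logt hx t).continuousAt)
        · exact Complex.continuous_ofReal.continuousAt
        · exact_mod_cast ht0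
      apply ContinuousAt.continuousWithinAt
      apply hco.congr
      filter_upwards [isOpen_ne.mem_nhds ht0] with s hs
      simp [hh, if_neg hs]
  have hint : IntervalIntegrable h volume 0 1 := by
    apply ContinuousOn.intervalIntegrable
    rwa [Set.uIcc_of_le zero_le_one]
  rw [intervalIntegrable_iff_integrableOn_Ioc_of_le zero_le_one] at hint ⊢
  apply hint.congr_fun _ measurableSet_Ioc
  intro s hs
  simp [hh, if_neg (ne_of_gt hs.1)]

lemma Li2_hasDerivAt {z : ℂ} (hz : z.im ≠ 0) :
    HasDerivAt Li2 (-Complex.log (1 - z) / z) z := by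
  have hz0 : z ≠ 0 := fun h => hz (by simp [h])
  obtain ⟨ε, hε⟩ : ∃ ε : ℝ, ε = |z.im| / 2 := ⟨_, rfl⟩
  have hεpos : 0 < ε := by rw [hε]; positivity
  have him : ∀ x ∈ ball z ε, |z.im| / 2 ≤ |x.im| := by
    intro x hx
    have h1 : |x.im - z.im| ≤ ‖x - z‖ := by
      simpa using Complex.abs_im_le_norm (x - z)
    have h2 : ‖x - z‖ < ε := mem_ball_iff_norm.mp hx
    have h3 := abs_sub_abs_le_abs_sub z.im x.im
    rw [abs_sub_comm z.im x.im] at h3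
    rw [hε] at h2
    linarith
  have himne : ∀ x ∈ ball z ε, x.im ≠ 0 := by
    intro x hx h0
    have h4 := him x hx
    rw [h0, abs_zero] at h4
    have : |z.im| ≤ 0 := by linarith
    exact hz (abs_eq_zero.mp (le_antisymm this (abs_nonneg _)))
  obtain ⟨R, hR⟩ : ∃ R : ℝ, R = ‖z‖ + ε + 1 := ⟨_, rfl⟩
  have hRpos : 0 < R := by rw [hR]; positivity
  obtain ⟨c, hc⟩ : ∃ c : ℝ, c = min (1/2) (|z.im| / (4 * R)) := ⟨_, rfl⟩
  have hzim : 0 < |z.im| := abs_pos.mpr hz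
  have hcpos : 0 < c := by
    rw [hc]; apply lt_min (by norm_num); positivity
  have hlow : ∀ x ∈ ball z ε, ∀ t ∈ Set.Ioc (0:ℝ) 1, c ≤ ‖1 - x * (t:ℂ)‖ := by
    intro x hx t ht
    have hxnorm : ‖x‖ ≤ ‖z‖ + ε := by
      have h2 := mem_ball_iff_norm.mp hx
      calc ‖x‖ = ‖z + (x - z)‖ := by ring_nf
        _ ≤ ‖z‖ + ‖x - z‖ := norm_add_le _ _
        _ ≤ ‖z‖ + ε := by linarith
    rcases le_or_gt (R * t) (1/2) with hcase | hcase
    · have h1 : ‖x * (t:ℂ)‖ ≤ 1/2 := by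
        rw [norm_mul]
        have ht' : ‖(t:ℂ)‖ = t := by
          rw [Complex.norm_real, Real.norm_eq_abs, abs_of_pos ht.1]
        rw [ht']
        calc ‖x‖ * t ≤ R * t := by
              apply mul_le_mul_of_nonneg_right _ ht.1.le
              rw [hR]; linarith
          _ ≤ 1/2 := hcase
      have h5 := norm_sub_norm_le (1:ℂ) (x * (t:ℂ))
      rw [norm_one] at h5
      have : c ≤ 1/2 := by rw [hc]; exact min_le_left _ _
      linarith
    · have h2 : |(1 - x * (t:ℂ)).im| ≤ ‖1 - x * (t:ℂ)‖ := Complex.abs_im_le_norm _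
      have h3 : (1 - x * (t:ℂ)).im = -(x.im * t) := by
        simp [Complex.sub_im, Complex.mul_im]
      have h4 : 1 / (2*R) < t := by
        rw [div_lt_iff₀ (by positivity)]
        nlinarith
      have h5 : |z.im| / 2 ≤ |x.im| := him x hx
      have h6 : |z.im| / (4*R) ≤ |x.im| * t := by
        have heq : |z.im| / (4 * R) = (|z.im| / 2) * (1 / (2 * R)) := by
          field_simp
          norm_num
        rw [heq]
        exact mul_le_mul h5 h4.le (by positivity) (abs_nonneg _)
      have h7 : c ≤ |z.im| / (4*R) := by rw [hc]; exact min_le_right _ _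
      have h8 : |x.im| * t = |(1 - x * (t:ℂ)).im| := by
        rw [h3, abs_neg, abs_mul, abs_of_pos ht.1]
      linarith
  -- dominated differentiation
  have hIoc : Set.uIoc (0:ℝ) 1 = Set.Ioc (0:ℝ) 1 := Set.uIoc_of_le zero_le_one
  have key := intervalIntegral.hasDerivAt_integral_of_dominated_loc_of_deriv_le
    (F := fun x (t : ℝ) => Complex.log (1 - x * (t:ℂ)) / (t:ℂ))
    (F' := fun x (t : ℝ) => -(1 - x * (t:ℂ))⁻¹) (x₀ := z)
    (a := 0) (b := 1) (bound := fun _ => 1/c) (μ := volume) (ball_mem_nhds z hεpos)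
    ?_ (aux_cont_int hz) ?_ ?_ ?_ ?_
  · have hD := key.2.neg
    have hval : -∫ t in (0:ℝ)..1, -(1 - z * (t:ℂ))⁻¹ = -Complex.log (1 - z) / z := by
      rw [intervalIntegral.integral_neg, neg_neg, aux_int_inv hz]
      field_simp
    rw [hval] at hD
    have : Li2 = fun x => -∫ t in (0:ℝ)..1, Complex.log (1 - x * (t:ℂ)) / (t:ℂ) := rfl
    rw [this]
    exact hD
  · -- measurability of F x for x near z
    filter_upwards [isOpen_ball.mem_nhds (mem_ball_self hεpos)] with x hx
    rw [hIoc]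
    apply ContinuousOn.aestronglyMeasurable _ measurableSet_Ioc
    intro t ht
    apply ContinuousAt.continuousWithinAt
    apply ContinuousAt.div
    · exact (aux_hasDerivAt_logt (himne x hx) t).continuousAt
    · exact Complex.continuous_ofReal.continuousAt
    · exact_mod_cast ne_of_gt ht.1
  · -- measurability of F' z
    apply Continuous.aestronglyMeasurable
    exact ((continuous_const.sub (continuous_const.mul Complex.continuous_ofReal)).inv₀
      (fun t => aux_ne hz t)).neg
  · -- bound
    apply MeasureTheory.ae_of_all
    intro t ht x hx
    rw [hIoc] at ht
    rw [norm_neg, norm_inv]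
    rw [inv_le_comm₀ (lt_of_lt_of_le hcpos (hlow x hx t ht)) (by positivity)]
    · rw [inv_div, div_le_iff₀ (by norm_num : (0:ℝ) < 1)]
      simpa using hlow x hx t ht
  · exact intervalIntegrable_const
  · -- differentiability in x
    apply MeasureTheory.ae_of_all
    intro t ht x hx
    rw [hIoc] at ht
    have h1 : HasDerivAt (fun u : ℂ => 1 - u * (t:ℂ)) (-(t:ℂ)) x := by
      simpa using ((hasDerivAt_id x).mul_const ((t:ℂ))).const_sub 1
    have h2 := (h1.clog (aux_slit' (himne x hx) t)).div_const ((t:ℂ))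
    refine h2.congr_deriv (Eq.symm ?_)
    have ht0 : (t:ℂ) ≠ 0 := by exact_mod_cast ne_of_gt ht.1
    field_simp [aux_ne (himne x hx) t]

lemma Li2_exp_hasDerivAt {y : ℂ} (h : (Complex.exp y).im ≠ 0) :
    HasDerivAt (fun v : ℂ => Li2 (-Complex.exp v)) (-Complex.log (1 + Complex.exp y)) y := by
  have h1 : (-Complex.exp y).im ≠ 0 := by simpa using h
  have he : HasDerivAt (fun v : ℂ => -Complex.exp v) (-Complex.exp y) y :=
    (Complex.hasDerivAt_exp y).neg
  have hd := (Li2_hasDerivAt h1).comp y he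
  refine hd.congr_deriv (Eq.symm ?_)
  have hne : Complex.exp y ≠ 0 := Complex.exp_ne_zero y
  rw [sub_neg_eq_add]
  field_simp

noncomputable def potCoef (nP nN : ℕ) (Q : Matrix (Fin (nP + nN)) (Fin (nP + nN)) ℝ)
    (w y : Fin (nP + nN) → ℂ) (k : Fin (nP + nN)) : ℂ :=
  Complex.I * (Q.map Complex.ofReal).mulVec y k
    + Complex.I * ((Q.map Complex.ofReal)ᵀ).mulVec y k
    - (epsR nP (nP + nN) k : ℂ) * w k
    - (epsR nP (nP + nN) k : ℂ) * Complex.I * Complex.log (1 + Complex.exp (y k))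

lemma potential_hasFDerivAt (nP nN : ℕ) (Q : Matrix (Fin (nP + nN)) (Fin (nP + nN)) ℝ)
    (w : Fin (nP + nN) → ℂ) (y : Fin (nP + nN) → ℂ)
    (hy : ∀ k, (Complex.exp (y k)).im ≠ 0) :
    HasFDerivAt (potential nP nN Q w)
      (∑ k, potCoef nP nN Q w y k •
        (ContinuousLinearMap.proj k : (Fin (nP + nN) → ℂ) →L[ℂ] ℂ)) y := by
  classical
  set M := Q.map Complex.ofReal with hM
  have hproj : ∀ j : Fin (nP + nN),
      HasFDerivAt (fun v : Fin (nP + nN) → ℂ => v j)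
        (ContinuousLinearMap.proj j : (Fin (nP + nN) → ℂ) →L[ℂ] ℂ) y :=
    fun j => hasFDerivAt_apply j y
  have hrepr : ∀ v : Fin (nP + nN) → ℂ, v ⬝ᵥ M.mulVec v
      = ∑ j, ∑ l, v j * (M j l * v l) := by
    intro v
    simp [dotProduct, Matrix.mulVec, Finset.mul_sum]
  have h1 : HasFDerivAt
      (fun v : Fin (nP + nN) → ℂ => Complex.I * (v ⬝ᵥ M.mulVec v))
      (Complex.I • ∑ j, ∑ l : Fin (nP + nN),
        (y j • (M j l • (ContinuousLinearMap.proj l : (Fin (nP + nN) → ℂ) →L[ℂ] ℂ))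
          + (M j l * y l) • (ContinuousLinearMap.proj j : (Fin (nP + nN) → ℂ) →L[ℂ] ℂ))) y := by
    simp only [hrepr]
    exact (HasFDerivAt.fun_sum fun j _ => HasFDerivAt.fun_sum fun l _ =>
      (hproj j).mul ((hproj l).const_mul (M j l))).const_mul Complex.I
  have h2 : HasFDerivAt
      (fun v : Fin (nP + nN) → ℂ => ∑ k, -(epsR nP (nP + nN) k : ℂ) * v k * w k)
      (∑ k : Fin (nP + nN), w k • ((-(epsR nP (nP + nN) k : ℂ)) •
        (ContinuousLinearMap.proj k : (Fin (nP + nN) → ℂ) →L[ℂ] ℂ))) y :=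
    HasFDerivAt.fun_sum fun k _ => ((hproj k).const_mul _).mul_const _
  have h3 : HasFDerivAt
      (fun v : Fin (nP + nN) → ℂ => Complex.I *
        ∑ k ∈ Finset.univ.filter (fun k : Fin (nP + nN) => (k : ℕ) < nP),
          Li2 (-Complex.exp (v k)))
      (Complex.I • ∑ k ∈ Finset.univ.filter (fun k : Fin (nP + nN) => (k : ℕ) < nP),
        (-Complex.log (1 + Complex.exp (y k))) •
          (ContinuousLinearMap.proj k : (Fin (nP + nN) → ℂ) →L[ℂ] ℂ)) y :=
    (HasFDerivAt.fun_sum fun k _ =>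
      (Li2_exp_hasDerivAt (hy k)).comp_hasFDerivAt y (hproj k)).const_mul Complex.I
  have h4 : HasFDerivAt
      (fun v : Fin (nP + nN) → ℂ => Complex.I *
        ∑ k ∈ Finset.univ.filter (fun k : Fin (nP + nN) => ¬ (k : ℕ) < nP),
          Li2 (-Complex.exp (v k)))
      (Complex.I • ∑ k ∈ Finset.univ.filter (fun k : Fin (nP + nN) => ¬ (k : ℕ) < nP),
        (-Complex.log (1 + Complex.exp (y k))) •
          (ContinuousLinearMap.proj k : (Fin (nP + nN) → ℂ) →L[ℂ] ℂ)) y :=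
    (HasFDerivAt.fun_sum fun k _ =>
      (Li2_exp_hasDerivAt (hy k)).comp_hasFDerivAt y (hproj k)).const_mul Complex.I
  have hall := ((h1.add h2).add h3).sub h4
  refine hall.congr_fderiv (Eq.symm ?_)
  ext v
  simp only [ContinuousLinearMap.sum_apply, ContinuousLinearMap.add_apply,
    ContinuousLinearMap.sub_apply, ContinuousLinearMap.smul_apply,
    ContinuousLinearMap.proj_apply, smul_eq_mul, potCoef]
  have hA : ∑ j : Fin (nP + nN), ∑ l, y j * (M j l * v l)
      = ∑ k, (Mᵀ.mulVec y) k * v k := by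
    rw [Finset.sum_comm]
    refine Finset.sum_congr rfl fun l _ => ?_
    simp only [Matrix.mulVec, dotProduct, Matrix.transpose_apply, Finset.sum_mul]
    exact Finset.sum_congr rfl fun j _ => by ring
  have hB : ∑ j : Fin (nP + nN), ∑ l, M j l * y l * v j
      = ∑ k, (M.mulVec y) k * v k := by
    refine Finset.sum_congr rfl fun j _ => ?_
    simp only [Matrix.mulVec, dotProduct, Finset.sum_mul]
  have hC : ∑ k, (epsR nP (nP + nN) k : ℂ) * Complex.I
        * Complex.log (1 + Complex.exp (y k)) * v k
      = Complex.I * ∑ k ∈ Finset.univ.filter (fun k : Fin (nP + nN) => (k : ℕ) < nP),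
          Complex.log (1 + Complex.exp (y k)) * v k
        - Complex.I * ∑ k ∈ Finset.univ.filter (fun k : Fin (nP + nN) => ¬ (k : ℕ) < nP),
          Complex.log (1 + Complex.exp (y k)) * v k := by
    rw [← Finset.sum_filter_add_sum_filter_not Finset.univ
      (fun k : Fin (nP + nN) => (k : ℕ) < nP)
      (fun k => (epsR nP (nP + nN) k : ℂ) * Complex.I
        * Complex.log (1 + Complex.exp (y k)) * v k), Finset.mul_sum, Finset.mul_sum]
    rw [sub_eq_add_neg, ← Finset.sum_neg_distrib]
    congr 1
    · refine Finset.sum_congr rfl fun k hk => ?_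
      have : (k : ℕ) < nP := (Finset.mem_filter.mp hk).2
      simp only [epsR, if_pos this, Complex.ofReal_one]
      ring
    · refine Finset.sum_congr rfl fun k hk => ?_
      have : ¬ (k : ℕ) < nP := (Finset.mem_filter.mp hk).2
      simp only [epsR, if_neg this, Complex.ofReal_neg, Complex.ofReal_one]
      ring
  have hL : ∑ k, (Complex.I * (M.mulVec y) k + Complex.I * (Mᵀ.mulVec y) k
        - (epsR nP (nP + nN) k : ℂ) * w k
        - (epsR nP (nP + nN) k : ℂ) * Complex.I
            * Complex.log (1 + Complex.exp (y k))) * v k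
      = Complex.I * (∑ k, (M.mulVec y) k * v k) + Complex.I * (∑ k, (Mᵀ.mulVec y) k * v k)
        - ∑ k, (epsR nP (nP + nN) k : ℂ) * w k * v k
        - ∑ k, (epsR nP (nP + nN) k : ℂ) * Complex.I
            * Complex.log (1 + Complex.exp (y k)) * v k := by
    rw [Finset.mul_sum, Finset.mul_sum, ← Finset.sum_add_distrib, ← Finset.sum_sub_distrib,
      ← Finset.sum_sub_distrib]
    exact Finset.sum_congr rfl fun k _ => by ring
  have hD : ∑ k, w k * (-(epsR nP (nP + nN) k : ℂ) * v k)
      = -∑ k, (epsR nP (nP + nN) k : ℂ) * w k * v k := by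
    rw [← Finset.sum_neg_distrib]
    exact Finset.sum_congr rfl fun k _ => by ring
  have hE : ∀ s : Finset (Fin (nP + nN)),
      ∑ k ∈ s, -Complex.log (1 + Complex.exp (y k)) * v k
      = -∑ k ∈ s, Complex.log (1 + Complex.exp (y k)) * v k := by
    intro s
    rw [← Finset.sum_neg_distrib]
    exact Finset.sum_congr rfl fun k _ => by ring
  have hQd : ∑ j : Fin (nP + nN), ∑ l, (y j * (M j l * v l) + M j l * y l * v j)
      = ∑ k, (Mᵀ.mulVec y) k * v k + ∑ k, (M.mulVec y) k * v k := by
    rw [← hA, ← hB, ← Finset.sum_add_distrib]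
    exact Finset.sum_congr rfl fun j _ => by rw [← Finset.sum_add_distrib]
  rw [hL, hD, hE, hE, hC, hQd]
  ring

end Helpers

/-- Proposition 3.2 (critThurscorrespondence): with `B` invertible,
`B⁻¹A = 𝒢 = -2EQE + P` and `w = B⁻¹(ν + u) - 𝒢 π 𝟙`, the potential function is
holomorphic near `y(z)` and its holomorphic gradient vanishes at `y(z)` iff
Thurston's gluing equations `A Log z + B Log z'' = i(ν + u)` hold. -/
theorem stmt_1 (nP nN : ℕ) (hn : 1 ≤ nP + nN)
    (Q A B : Matrix (Fin (nP + nN)) (Fin (nP + nN)) ℝ) (hQ : Q.IsSymm)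
    (hB : IsUnit B.det)
    (hBA : B⁻¹ * A
      = (-2 : ℝ) • (Matrix.diagonal (epsR nP (nP + nN)) * Q *
          Matrix.diagonal (epsR nP (nP + nN)))
        + Matrix.diagonal (fun k => max (epsR nP (nP + nN) k) 0))
    (ν : Fin (nP + nN) → ℝ) (u : Fin (nP + nN) → ℂ)
    (w : Fin (nP + nN) → ℂ)
    (hw : w = ((B⁻¹).map Complex.ofReal).mulVec (fun k => (ν k : ℂ) + u k)
      - (((B⁻¹ * A).map Complex.ofReal)).mulVec (fun _ => (π : ℂ)))
    (z : Fin (nP + nN) → ℂ) (hz : ∀ k, 0 < (z k).im)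
    (y : Fin (nP + nN) → ℂ)
    (hy : ∀ k, y k = (epsR nP (nP + nN) k : ℂ) * (Complex.log (z k) - Complex.I * (π : ℂ))) :
    (∃ U : Set (Fin (nP + nN) → ℂ), IsOpen U ∧ y ∈ U ∧
        DifferentiableOn ℂ (potential nP nN Q w) U) ∧
    ((∀ k, fderiv ℂ (potential nP nN Q w) y (Pi.single k 1) = 0) ↔
      (A.map Complex.ofReal).mulVec (fun k => Complex.log (z k))
          + (B.map Complex.ofReal).mulVec (fun k => Complex.log ((z k - 1) / z k))
        = fun k => Complex.I * ((ν k : ℂ) + u k)) := by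
  classical
  -- basic nonvanishing facts
  have hz0 : ∀ k, z k ≠ 0 := by
    intro k h
    have h2 := hz k
    rw [h] at h2
    simp at h2
  have hexp : ∀ k, Complex.exp (y k) = if (k : ℕ) < nP then -z k else -(z k)⁻¹ := by
    intro k
    rw [hy k]
    by_cases hk : (k : ℕ) < nP
    · simp only [epsR, if_pos hk, Complex.ofReal_one, one_mul]
      rw [Complex.exp_sub, Complex.exp_log (hz0 k), mul_comm Complex.I ((π : ℝ) : ℂ),
        Complex.exp_pi_mul_I, div_neg, div_one]
    · simp only [epsR, if_neg hk, Complex.ofReal_neg, Complex.ofReal_one]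
      rw [neg_one_mul, Complex.exp_neg, Complex.exp_sub, Complex.exp_log (hz0 k),
        mul_comm Complex.I ((π : ℝ) : ℂ), Complex.exp_pi_mul_I, div_neg, div_one, inv_neg]
  have himexp : ∀ k, (Complex.exp (y k)).im ≠ 0 := by
    intro k
    rw [hexp k]
    by_cases hk : (k : ℕ) < nP
    · rw [if_pos hk]
      simp only [Complex.neg_im, neg_ne_zero]
      exact (hz k).ne'
    · rw [if_neg hk]
      simp only [Complex.neg_im, neg_ne_zero, Complex.inv_im]
      apply div_ne_zero (neg_ne_zero.mpr (hz k).ne')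
      exact Complex.normSq_pos.mpr (hz0 k) |>.ne'
  have h1exp : ∀ k, (1 : ℂ) + Complex.exp (y k)
      = if (k : ℕ) < nP then 1 - z k else (z k - 1) / z k := by
    intro k
    rw [hexp k]
    by_cases hk : (k : ℕ) < nP
    · rw [if_pos hk, if_pos hk]; ring
    · rw [if_neg hk, if_neg hk, sub_div, div_self (hz0 k), one_div]
      ring
  have hlog : ∀ k, Complex.log (1 + Complex.exp (y k))
      = Complex.log ((z k - 1) / z k)
        + (if (k : ℕ) < nP then (1 : ℂ) else 0) * (Complex.log (z k) - Complex.I * (π : ℝ)) := by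
    intro k
    rw [h1exp k]
    by_cases hk : (k : ℕ) < nP
    · rw [if_pos hk, if_pos hk, one_mul]
      have him1 : 0 < (z k - 1).im := by
        simp only [Complex.sub_im, Complex.one_im, sub_zero]
        exact hz k
      have e1 : (1 : ℂ) - z k = -(z k - 1) := by ring
      rw [e1, myLog_neg_of_im_pos him1, myLog_div_of_im_pos him1 (hz k)]
      push_cast
      ring
    · rw [if_neg hk, if_neg hk, zero_mul, add_zero]
  -- matrix map facts
  have hmapmul : ∀ (M N : Matrix (Fin (nP + nN)) (Fin (nP + nN)) ℝ),
      (M * N).map Complex.ofReal = M.map Complex.ofReal * N.map Complex.ofReal := by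
    intro M N
    ext i j
    simp only [Matrix.map_apply, Matrix.mul_apply]
    push_cast
    rfl
  have hmapone : (1 : Matrix (Fin (nP + nN)) (Fin (nP + nN)) ℝ).map Complex.ofReal = 1 := by
    ext i j
    simp [Matrix.map_apply, Matrix.one_apply, apply_ite]
  have hBBi : B * B⁻¹ = 1 := Matrix.mul_nonsing_inv B hB
  have hBiB : B⁻¹ * B = 1 := Matrix.nonsing_inv_mul B hB
  have hBG : B * (B⁻¹ * A) = A := by rw [← Matrix.mul_assoc, hBBi, Matrix.one_mul]
  have hfd := potential_hasFDerivAt nP nN Q w y himexp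
  have hval : ∀ k, fderiv ℂ (potential nP nN Q w) y (Pi.single k 1)
      = potCoef nP nN Q w y k := by
    intro k
    rw [hfd.fderiv, ContinuousLinearMap.sum_apply]
    simp only [ContinuousLinearMap.smul_apply, ContinuousLinearMap.proj_apply, smul_eq_mul,
      Pi.single_apply]
    rw [Finset.sum_eq_single k]
    · simp
    · intro b _ hb
      simp [hb]
    · intro h
      exact absurd (Finset.mem_univ k) h
  -- entries of 𝒢
  have hGent : ∀ k l, (B⁻¹ * A) k l
      = -2 * (epsR nP (nP + nN) k * Q k l * epsR nP (nP + nN) l)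
        + (if k = l then max (epsR nP (nP + nN) k) 0 else 0) := by
    intro k l
    rw [hBA]
    simp only [Matrix.add_apply, Matrix.smul_apply, Matrix.mul_diagonal, Matrix.diagonal_mul,
      Matrix.diagonal_apply, smul_eq_mul]
  have hmax : ∀ k, ((max (epsR nP (nP + nN) k) 0 : ℝ) : ℂ)
      = if (k : ℕ) < nP then (1 : ℂ) else 0 := by
    intro k
    by_cases hk : (k : ℕ) < nP
    · simp [epsR, if_pos hk]
    · simp [epsR, if_neg hk]
  -- key sum expansions
  have hGrow : ∀ (k : Fin (nP + nN)) (f : Fin (nP + nN) → ℂ),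
      ∑ l, (((B⁻¹ * A) k l : ℝ) : ℂ) * f l
      = -2 * ((epsR nP (nP + nN) k : ℝ) : ℂ)
          * (∑ l, ((Q k l : ℝ) : ℂ) * ((epsR nP (nP + nN) l : ℝ) : ℂ) * f l)
        + (if (k : ℕ) < nP then (1 : ℂ) else 0) * f k := by
    intro k f
    have hterm : ∀ l, (((B⁻¹ * A) k l : ℝ) : ℂ) * f l
        = -2 * ((epsR nP (nP + nN) k : ℝ) : ℂ)
            * (((Q k l : ℝ) : ℂ) * ((epsR nP (nP + nN) l : ℝ) : ℂ) * f l)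
          + (if k = l then ((max (epsR nP (nP + nN) k) 0 : ℝ) : ℂ) else 0) * f l := by
      intro l
      rw [hGent k l]
      push_cast [apply_ite Complex.ofReal]
      ring
    simp only [hterm]
    rw [Finset.sum_add_distrib, ← Finset.mul_sum]
    congr 1
    simp only [ite_mul, zero_mul]
    rw [Finset.sum_ite_eq]
    simp [hmax k]
  have hS : ∀ k, (Q.map Complex.ofReal).mulVec y k
      = (∑ l, ((Q k l : ℝ) : ℂ) * ((epsR nP (nP + nN) l : ℝ) : ℂ) * Complex.log (z l))
        - Complex.I * ((π : ℝ) : ℂ)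
          * ∑ l, ((Q k l : ℝ) : ℂ) * ((epsR nP (nP + nN) l : ℝ) : ℂ) := by
    intro k
    simp only [Matrix.mulVec, dotProduct, Matrix.map_apply]
    rw [Finset.mul_sum, ← Finset.sum_sub_distrib]
    refine Finset.sum_congr rfl fun l _ => ?_
    rw [hy l]
    ring
  have hMsymm : (Q.map Complex.ofReal)ᵀ = Q.map Complex.ofReal := by
    rw [← Matrix.transpose_map, hQ]
  -- the per-coordinate identity
  have hkey : ∀ k, potCoef nP nN Q w y k
      = -((epsR nP (nP + nN) k : ℝ) : ℂ) * Complex.I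
          * (((B⁻¹ * A).map Complex.ofReal).mulVec (fun j => Complex.log (z j)) k
            + Complex.log ((z k - 1) / z k)
            - Complex.I
              * ((B⁻¹).map Complex.ofReal).mulVec (fun j => ((ν j : ℝ) : ℂ) + u j) k) := by
    intro k
    have hGLz : ((B⁻¹ * A).map Complex.ofReal).mulVec (fun j => Complex.log (z j)) k
        = -2 * ((epsR nP (nP + nN) k : ℝ) : ℂ)
            * (∑ l, ((Q k l : ℝ) : ℂ) * ((epsR nP (nP + nN) l : ℝ) : ℂ) * Complex.log (z l))
          + (if (k : ℕ) < nP then (1 : ℂ) else 0) * Complex.log (z k) := by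
      have h0 := hGrow k (fun j => Complex.log (z j))
      simpa only [Matrix.mulVec, dotProduct, Matrix.map_apply] using h0
    have hGpi : ((B⁻¹ * A).map Complex.ofReal).mulVec (fun _ => ((π : ℝ) : ℂ)) k
        = -2 * ((epsR nP (nP + nN) k : ℝ) : ℂ)
            * ((∑ l, ((Q k l : ℝ) : ℂ) * ((epsR nP (nP + nN) l : ℝ) : ℂ)) * ((π : ℝ) : ℂ))
          + (if (k : ℕ) < nP then (1 : ℂ) else 0) * ((π : ℝ) : ℂ) := by
      have h0 := hGrow k (fun _ => ((π : ℝ) : ℂ))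
      rw [Finset.sum_mul]
      simpa only [Matrix.mulVec, dotProduct, Matrix.map_apply, Finset.sum_mul,
        mul_assoc] using h0
    have hwk : w k
        = ((B⁻¹).map Complex.ofReal).mulVec (fun j => ((ν j : ℝ) : ℂ) + u j) k
          - ((B⁻¹ * A).map Complex.ofReal).mulVec (fun _ => ((π : ℝ) : ℂ)) k := by
      rw [hw]
      rfl
    simp only [potCoef, hMsymm]
    rw [hS k, hlog k, hwk, hGLz, hGpi]
    by_cases hk : (k : ℕ) < nP
    · have he1 : ((epsR nP (nP + nN) k : ℝ) : ℂ) = 1 := by simp [epsR, if_pos hk]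
      rw [he1, if_pos hk]
      linear_combination (((π : ℝ) : ℂ)
        - 2 * ((π : ℝ) : ℂ) * (∑ l, ((Q k l : ℝ) : ℂ) * ((epsR nP (nP + nN) l : ℝ) : ℂ))
        - ((B⁻¹).map Complex.ofReal).mulVec (fun j => ((ν j : ℝ) : ℂ) + u j) k)
        * Complex.I_sq
    · have he1 : ((epsR nP (nP + nN) k : ℝ) : ℂ) = -1 := by simp [epsR, if_neg hk]
      rw [he1, if_neg hk]
      linear_combination (-2 * ((π : ℝ) : ℂ)
        * (∑ l, ((Q k l : ℝ) : ℂ) * ((epsR nP (nP + nN) l : ℝ) : ℂ))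
        + ((B⁻¹).map Complex.ofReal).mulVec (fun j => ((ν j : ℝ) : ℂ) + u j) k)
        * Complex.I_sq
  have heps_ne : ∀ k, ((epsR nP (nP + nN) k : ℝ) : ℂ) ≠ 0 := by
    intro k
    by_cases hk : (k : ℕ) < nP
    · simp [epsR, if_pos hk]
    · simp [epsR, if_neg hk]
  constructor
  · -- open set and holomorphy
    refine ⟨{v | ∀ k, (Complex.exp (v k)).im ≠ 0}, ?_, himexp, ?_⟩
    · have hset : {v : Fin (nP + nN) → ℂ | ∀ k, (Complex.exp (v k)).im ≠ 0}
          = ⋂ k, (fun v : Fin (nP + nN) → ℂ => (Complex.exp (v k)).im) ⁻¹' {(0 : ℝ)}ᶜ := by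
        ext v
        simp [Set.mem_iInter]
      rw [hset]
      apply isOpen_iInter_of_finite
      intro k
      apply IsOpen.preimage _ isOpen_compl_singleton
      exact Complex.continuous_im.comp (Complex.continuous_exp.comp (continuous_apply k))
    · intro v hv
      exact (potential_hasFDerivAt nP nN Q w v hv).differentiableAt.differentiableWithinAt
  · -- the equivalence
    constructor
    · intro h
      have hT : ∀ k, ((B⁻¹ * A).map Complex.ofReal).mulVec (fun j => Complex.log (z j)) k
          + Complex.log ((z k - 1) / z k)
          = Complex.I
            * ((B⁻¹).map Complex.ofReal).mulVec (fun j => ((ν j : ℝ) : ℂ) + u j) k := by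
        intro k
        have h0 := h k
        rw [hval k, hkey k] at h0
        rcases mul_eq_zero.mp h0 with h1 | h1
        · rcases mul_eq_zero.mp h1 with h2 | h2
          · exact absurd h2 (neg_ne_zero.mpr (heps_ne k))
          · exact absurd h2 Complex.I_ne_zero
        · linear_combination h1
      have hvec : ((B⁻¹ * A).map Complex.ofReal).mulVec (fun j => Complex.log (z j))
          + (fun k => Complex.log ((z k - 1) / z k))
          = fun k => Complex.I
            * ((B⁻¹).map Complex.ofReal).mulVec (fun j => ((ν j : ℝ) : ℂ) + u j) k := by
        funext k
        exact hT k
      have hAc : A.map Complex.ofReal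
          = B.map Complex.ofReal * (B⁻¹ * A).map Complex.ofReal := by
        rw [← hmapmul, hBG]
      rw [hAc, ← Matrix.mulVec_mulVec, ← Matrix.mulVec_add, hvec]
      have hIsmul : (fun k => Complex.I
            * ((B⁻¹).map Complex.ofReal).mulVec (fun j => ((ν j : ℝ) : ℂ) + u j) k)
          = Complex.I • ((B⁻¹).map Complex.ofReal).mulVec (fun j => ((ν j : ℝ) : ℂ) + u j) :=
        rfl
      rw [hIsmul, Matrix.mulVec_smul, Matrix.mulVec_mulVec, ← hmapmul, hBBi, hmapone,
        Matrix.one_mulVec]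
      rfl
    · intro h
      have hvec : ((B⁻¹ * A).map Complex.ofReal).mulVec (fun j => Complex.log (z j))
          + (fun k => Complex.log ((z k - 1) / z k))
          = Complex.I • ((B⁻¹).map Complex.ofReal).mulVec (fun j => ((ν j : ℝ) : ℂ) + u j) := by
        have h1 := congrArg (((B⁻¹).map Complex.ofReal).mulVec ·) h
        rw [Matrix.mulVec_add, Matrix.mulVec_mulVec, Matrix.mulVec_mulVec, ← hmapmul,
          ← hmapmul, hBiB, hmapone, Matrix.one_mulVec] at h1
        have h2 : (fun k => Complex.I * (((ν k : ℝ) : ℂ) + u k))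
            = Complex.I • (fun j => ((ν j : ℝ) : ℂ) + u j) := rfl
        rw [h2, Matrix.mulVec_smul] at h1
        exact h1
      intro k
      rw [hval k, hkey k]
      have h3 := congrFun hvec k
      simp only [Pi.add_apply, Pi.smul_apply, smul_eq_mul] at h3
      rw [sub_eq_zero.mpr h3, mul_zero]
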